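/- If a phase automaton A is inductive with respect to a transition system TS and A is safe with respect to a property P (meaning φ q v ⊆ P v for every phase q and valuation v), then every reachable state of TS satisfies P v for every valuation v. -/
import Mathlib


/-- An inductive and safe phase automaton implies every reachable state satisfies P. -/
theorem inductive_safe_phase_automaton_implies_safety
    {S V Q : Type*} [Fintype Q]
    (Init : Set S) (TR : Set (S × S)) (ι : Q)
    (δ : Q → Q → V → Set (S × S)) (φ : Q → V → Set S) (P : V → Set S)
    (hinit : ∀ v, Init ⊆ φ ι v)
    (hind : ∀ q p v σ σ', σ ∈ φ q v → (σ, σ') ∈ δ q p v → σ' ∈ φ p v)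
    (hcov : ∀ q v σ σ', σ ∈ φ q v → (σ, σ') ∈ TR → ∃ p, (σ, σ') ∈ δ q p v)
    (hsafe : ∀ q v, φ q v ⊆ P v) :
    ∀ σ : S,
      (∃ (n : ℕ) (τ : ℕ → S), τ 0 ∈ Init ∧ (∀ i < n, (τ i, τ (i + 1)) ∈ TR) ∧ τ n = σ) →
      ∀ v : V, σ ∈ P v := by
  rintro σ ⟨n, τ, h0, hstep, rfl⟩ v
  suffices h : ∃ q, τ n ∈ φ q v by
    obtain ⟨q, hq⟩ := h
    exact hsafe q v hq
  induction n with
  | zero => exact ⟨ι, hinit v h0⟩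
  | succ k ih =>
    obtain ⟨q, hq⟩ := ih (fun i hi => hstep i (Nat.lt_succ_of_lt hi))
    obtain ⟨p, hp⟩ := hcov q v (τ k) (τ (k+1)) hq (hstep k (Nat.lt_succ_self k))
    exact ⟨p, hind q p v _ _ hq hp⟩
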